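/- Let a, b, c, r₀, r₁, r₂, r₃ be elements of a field, and suppose c ≠ 0. Let (λ₁, λ₂) solve cλ₁ + bλ₂ = r₂, cλ₂ = r₃, and set X = r₀ − aλ₁, Y = r₁ − bλ₁ − aλ₂. Then the resultant of r₀x³ + r₁x² + r₂x + r₃ and ax² + bx + c equals c²(cX² − bXY + aY²). -/

import Mathlib

open Polynomial

/-- The Sylvester-style matrix of `f` (viewed as having degree `m`) and `g` (viewed as having
degree `n`): the first `n` columns are the shifted coefficient columns of `f` and the remaining
`m` columns are the shifted coefficient columns of `g`. -/
noncomputable def sylvester {R : Type*} [CommRing R] (f g : R[X]) (m n : ℕ) :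
    Matrix (Fin (m + n)) (Fin (m + n)) R :=
  Matrix.of fun i j =>
    if (j : ℕ) < n then
      (if (j : ℕ) ≤ (i : ℕ) ∧ (i : ℕ) - (j : ℕ) ≤ m then
        f.coeff (m - ((i : ℕ) - (j : ℕ))) else 0)
    else
      (if (j : ℕ) - n ≤ (i : ℕ) ∧ (i : ℕ) - ((j : ℕ) - n) ≤ n then
        g.coeff (n - ((i : ℕ) - ((j : ℕ) - n))) else 0)

/-- The resultant of `f` (of degree `m`) and `g` (of degree `n`), as the determinant of the
Sylvester matrix. -/
noncomputable def res {R : Type*} [CommRing R] (f g : R[X]) (m n : ℕ) : R :=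
  (_root_.sylvester f g m n).det

set_option maxHeartbeats 2000000 in
lemma syl_eq {F : Type*} [Field F] (a b c r0 r1 r2 r3 : F) :
    _root_.sylvester (C r0 * X ^ 3 + C r1 * X ^ 2 + C r2 * X + C r3) (C a * X ^ 2 + C b * X + C c) 3 2 =
      !![r0, 0, a, 0, 0; r1, r0, b, a, 0; r2, r1, c, b, a; r3, r2, 0, c, b; 0, r3, 0, 0, c] := by
  ext i j
  fin_cases i <;> fin_cases j <;>
    norm_num [_root_.sylvester, coeff_add, coeff_C_mul, coeff_X_pow, coeff_C, coeff_X] <;>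
    (intro h; exact absurd h (by decide))

set_option maxHeartbeats 2000000 in
/-- If `c ≠ 0`, `(λ₁, λ₂)` solves `cλ₁ + bλ₂ = r₂`, `cλ₂ = r₃`, and `X = r₀ - aλ₁`,
`Y = r₁ - bλ₁ - aλ₂`, then the resultant of `r₀x³ + r₁x² + r₂x + r₃` and `ax² + bx + c`
equals `c²(cX² - bXY + aY²)`. -/
theorem resultant_cubic_quadratic_conic {F : Type*} [Field F]
    (a b c r0 r1 r2 r3 l1 l2 Xv Yv : F) (hc : c ≠ 0)
    (h1 : c * l1 + b * l2 = r2) (h2 : c * l2 = r3)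
    (hX : Xv = r0 - a * l1) (hY : Yv = r1 - b * l1 - a * l2) :
    res (C r0 * X ^ 3 + C r1 * X ^ 2 + C r2 * X + C r3) (C a * X ^ 2 + C b * X + C c) 3 2 =
      c ^ 2 * (c * Xv ^ 2 - b * Xv * Yv + a * Yv ^ 2) := by
  subst hX hY h1 h2
  rw [res, syl_eq]
  simp [Matrix.det_succ_row_zero, Fin.sum_univ_succ, Fin.succAbove]
  ring
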